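/- Let (Ω, μ) be a measure space, let W be a closed subspace of the real Hilbert space L²(μ), and suppose there is a constant C ≥ 0 such that every w ∈ W satisfies ‖w‖_{L^∞(μ)} ≤ C·‖w‖_{L²(μ)} (essential supremum norm). Let P denote the orthogonal projection of L²(μ) onto W. Then for every Ψ ∈ L¹(μ) ∩ L²(μ) one has ‖P(Ψ)‖_{L²(μ)} ≤ C·‖Ψ‖_{L¹(μ)} and ‖P(Ψ)‖_{L^∞(μ)} ≤ C²·‖Ψ‖_{L¹(μ)}; if moreover μ(Ω) < ∞, then also ‖P(Ψ)‖_{L¹(μ)} ≤ C²·μ(Ω)·‖Ψ‖_{L¹(μ)}. -/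

import Mathlib

open MeasureTheory ENNReal

/-- If the orthogonal projection onto a closed subspace `W` of `L²(μ)` whose elements satisfy
a uniform `L^∞`–`L²` bound, then the projection is bounded `L¹ → L²`, `L¹ → L^∞`, and (for
finite measures) `L¹ → L¹`. -/
theorem projection_L1_bounds {Ω : Type*} [MeasurableSpace Ω] (μ : Measure Ω)
    (W : Submodule ℝ (Lp ℝ 2 μ)) (hWclosed : IsClosed (W : Set (Lp ℝ 2 μ)))
    [CompleteSpace W]
    (C : ℝ) (hC : 0 ≤ C)
    (hbound : ∀ w : Lp ℝ 2 μ, w ∈ W → eLpNorm (⇑w) ∞ μ ≤ ENNReal.ofReal (C * ‖w‖))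
    (Ψ : Lp ℝ 2 μ) (hΨ : Integrable (⇑Ψ) μ) :
    ‖(Submodule.orthogonalProjectionOnto W Ψ : Lp ℝ 2 μ)‖ ≤ C * (eLpNorm (⇑Ψ) 1 μ).toReal ∧
    eLpNorm (⇑(Submodule.orthogonalProjectionOnto W Ψ : Lp ℝ 2 μ)) ∞ μ
      ≤ ENNReal.ofReal (C ^ 2 * (eLpNorm (⇑Ψ) 1 μ).toReal) ∧
    (μ Set.univ < ⊤ →
      eLpNorm (⇑(Submodule.orthogonalProjectionOnto W Ψ : Lp ℝ 2 μ)) 1 μ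
        ≤ ENNReal.ofReal (C ^ 2 * (μ Set.univ).toReal * (eLpNorm (⇑Ψ) 1 μ).toReal)) := by
  set w : Lp ℝ 2 μ := (Submodule.orthogonalProjectionOnto W Ψ : Lp ℝ 2 μ) with hw
  have hwW : w ∈ W := (Submodule.orthogonalProjectionOnto W Ψ).2
  have hbw : eLpNorm (⇑w) ∞ μ ≤ ENNReal.ofReal (C * ‖w‖) := hbound w hwW
  set N : ℝ := (eLpNorm (⇑Ψ) 1 μ).toReal with hN
  have hN0 : 0 ≤ N := ENNReal.toReal_nonneg
  -- N equals the integral of ‖Ψ‖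
  have hNint : N = ∫ a, ‖Ψ a‖ ∂μ := by
    have := ofReal_integral_norm_eq_lintegral_enorm hΨ
    rw [hN, eLpNorm_one_eq_lintegral_enorm, ← this, ENNReal.toReal_ofReal
      (integral_nonneg fun a => norm_nonneg _)]
  set M : ℝ := (eLpNorm (⇑w) ∞ μ).toReal with hM
  have hMle : M ≤ C * ‖w‖ := by
    rw [hM]
    exact ENNReal.toReal_le_of_le_ofReal (by positivity) hbw
  -- a.e. bound on w
  have haew : ∀ᵐ a ∂μ, ‖w a‖ ≤ M := by
    have h := enorm_ae_le_eLpNormEssSup (⇑w) μ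
    filter_upwards [h] with a ha
    have hfin : eLpNormEssSup (⇑w) μ ≠ ⊤ := by
      rw [← eLpNorm_exponent_top]
      exact (lt_of_le_of_lt hbw ENNReal.ofReal_lt_top).ne
    have : (‖w a‖₊ : ℝ≥0∞).toReal ≤ (eLpNormEssSup (⇑w) μ).toReal :=
      ENNReal.toReal_mono hfin ha
    simpa [hM, eLpNorm_exponent_top] using this
  -- key inner product identity: ‖w‖² = ⟪Ψ, w⟫
  have hinner : ‖w‖ ^ 2 = ∫ a, Ψ a * w a ∂μ := by
    have h1 : (inner ℝ (Submodule.orthogonalProjectionOnto W Ψ) (Submodule.orthogonalProjectionOnto W Ψ) : ℝ)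
        = inner ℝ Ψ w :=
      Submodule.inner_orthogonalProjectionOnto_eq_of_mem_right (K := W) (Submodule.orthogonalProjectionOnto W Ψ) Ψ
    have h2 : (inner ℝ (Submodule.orthogonalProjectionOnto W Ψ) (Submodule.orthogonalProjectionOnto W Ψ) : ℝ) = ‖w‖ ^ 2 := by
      rw [Submodule.coe_inner, ← hw, real_inner_self_eq_norm_sq]
    have h3 : (inner ℝ Ψ w : ℝ) = ∫ a, Ψ a * w a ∂μ := by
      rw [L2.inner_def]
      simp [RCLike.inner_apply, mul_comm]
    rw [← h2, h1, h3]
  have hM0 : 0 ≤ M := ENNReal.toReal_nonneg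
  -- bound the integral
  have hintle : ∫ a, Ψ a * w a ∂μ ≤ M * N := by
    have hmeas : AEStronglyMeasurable (fun a => Ψ a * w a) μ :=
      (Lp.aestronglyMeasurable Ψ).mul (Lp.aestronglyMeasurable w)
    have hdom : ∀ᵐ a ∂μ, ‖Ψ a * w a‖ ≤ M * ‖Ψ a‖ := by
      filter_upwards [haew] with a ha
      rw [norm_mul]
      calc ‖Ψ a‖ * ‖w a‖ ≤ ‖Ψ a‖ * M := by
            exact mul_le_mul_of_nonneg_left ha (norm_nonneg _)
        _ = M * ‖Ψ a‖ := mul_comm _ _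
    have hMint : Integrable (fun a => M * ‖Ψ a‖) μ := hΨ.norm.const_mul M
    have hint : Integrable (fun a => Ψ a * w a) μ := hMint.mono' hmeas hdom
    calc ∫ a, Ψ a * w a ∂μ ≤ ∫ a, M * ‖Ψ a‖ ∂μ := by
          refine integral_mono_ae hint hMint ?_
          filter_upwards [hdom] with a ha
          exact (le_abs_self _).trans (by simpa [abs_mul] using ha)
      _ = M * N := by rw [integral_const_mul, ← hNint]
  have hL2 : ‖w‖ ≤ C * N := by
    rcases eq_or_lt_of_le (norm_nonneg w) with h0 | h0
    · rw [← h0]; positivity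
    · have : ‖w‖ ^ 2 ≤ (C * N) * ‖w‖ := by
        calc ‖w‖ ^ 2 = ∫ a, Ψ a * w a ∂μ := hinner
        _ ≤ M * N := hintle
        _ ≤ (C * ‖w‖) * N := by nlinarith [mul_le_mul_of_nonneg_right hMle hN0]
        _ = (C * N) * ‖w‖ := by ring
      nlinarith
  have hLinf : eLpNorm (⇑w) ∞ μ ≤ ENNReal.ofReal (C ^ 2 * N) := by
    refine hbw.trans (ENNReal.ofReal_le_ofReal ?_)
    calc C * ‖w‖ ≤ C * (C * N) := by nlinarith
    _ = C ^ 2 * N := by ring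
  refine ⟨hL2, hLinf, fun hμ => ?_⟩
  have h1inf : eLpNorm (⇑w) 1 μ ≤ eLpNorm (⇑w) ∞ μ * μ Set.univ := by
    have := eLpNorm_le_eLpNorm_mul_rpow_measure_univ (p := 1) (q := ∞)
      le_top (Lp.aestronglyMeasurable w)
    simpa using this
  calc eLpNorm (⇑w) 1 μ ≤ eLpNorm (⇑w) ∞ μ * μ Set.univ := h1inf
    _ ≤ ENNReal.ofReal (C ^ 2 * N) * ENNReal.ofReal (μ Set.univ).toReal := by
        rw [ENNReal.ofReal_toReal hμ.ne]
        exact mul_le_mul_left hLinf _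
    _ = ENNReal.ofReal (C ^ 2 * (μ Set.univ).toReal * N) := by
        rw [← ENNReal.ofReal_mul (by positivity)]; ring_nf
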